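/- With the notation of the Newton–Puiseux factorization setup, set A = { i : ord_t(φ_i − φ_γ) ≥ Mξ } and, for i ∈ A, let c_i ∈ ℂ be the coefficient of t^{Mξ} in φ_i − φ_γ; for i ∉ A let b_i ∈ ℂ be the leading coefficient of φ_γ − φ_i (the coefficient of t^{ord_t(φ_γ − φ_i)}). Then N = |A|·Mξ + Σ_{i∉A} ord_t(φ_i − φ_γ) and P_{f,γ,ξ}(z) = c·∏_{i∈A} (z − c_i), where c = U(0,0)·∏_{i∉A} b_i ≠ 0. In particular deg P_{f,γ,ξ} = |A| and the complex roots of P_{f,γ,ξ} are exactly the numbers c_i, i ∈ A. (The computation in the proof of Proposition 7.1 of the paper.) -/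

import Mathlib

/-!  Setup (Proposition 7.1 of the paper).  `f : (ℝ²,0) → (ℝ,0)` is mini-regular in `x` of
order `m`, and `f(x, t^M) = U(x,t)·∏ᵢ (x − φᵢ(t))` is a Newton–Puiseux factorization, with
`U(x,t) = Σₙ Uₙ(t) xⁿ` analytic, `U(0,0) ≠ 0`, and `φ₁, …, φ_m` complex power series vanishing
at `0`.  Here the factorized data `U, φ` is taken as the primitive datum.  For a real demi-branch
`x = λ(y)` with `φγ(t) = λ(t^M)` and a rational `ξ > 1` with `e = Mξ ∈ ℕ`, the expansion
`f(φγ(t) + z·t^e, t^M) = Σ_k F_k(z) t^k` is the power series `Gser` below, with coefficients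
`F_k ∈ ℂ[z]`; `N = min{k : F_k ≠ 0}` and `P_{f,γ,ξ} = F_N`. -/

/-- Substitution of a power series `q` with vanishing constant term for `x` in
`U(x,t) = Σₙ Uₙ(t) xⁿ` (the truncated sum is the full one since `ord qⁿ ≥ n`). -/
noncomputable def substX (U : ℕ → PowerSeries ℂ) (q : PowerSeries (Polynomial ℂ)) :
    PowerSeries (Polynomial ℂ) :=
  PowerSeries.mk fun k => ∑ n ∈ Finset.range (k + 1),
    PowerSeries.coeff (R := Polynomial ℂ) k
      (PowerSeries.map (Polynomial.C : ℂ →+* Polynomial ℂ) (U n) * q ^ n)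

/-- The complexification of the real power series `φγ`. -/
noncomputable def cxify (φγ : PowerSeries ℝ) : PowerSeries ℂ :=
  PowerSeries.map (algebraMap ℝ ℂ) φγ

/-- `xsub = φγ(t) + z·t^e`, as a power series in `t` with coefficients in `ℂ[z]`. -/
noncomputable def xsub (φγ : PowerSeries ℝ) (e : ℕ) : PowerSeries (Polynomial ℂ) :=
  PowerSeries.map (Polynomial.C : ℂ →+* Polynomial ℂ) (cxify φγ)
    + PowerSeries.monomial (R := Polynomial ℂ) e Polynomial.X

/-- `Gser = U(xsub, t) · ∏ᵢ (xsub − φᵢ(t)) = f(φγ(t) + z t^e, t^M) = Σ_k F_k(z) t^k`. -/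
noncomputable def Gser (m : ℕ) (U : ℕ → PowerSeries ℂ) (φ : Fin m → PowerSeries ℂ)
    (φγ : PowerSeries ℝ) (e : ℕ) : PowerSeries (Polynomial ℂ) :=
  substX U (xsub φγ e) *
    ∏ i : Fin m, (xsub φγ e - PowerSeries.map (Polynomial.C : ℂ →+* Polynomial ℂ) (φ i))

open scoped Classical in
/-- `A = {i : ord (φᵢ − φγ) ≥ e}`. -/
noncomputable def Aset (m e : ℕ) (φ : Fin m → PowerSeries ℂ) (φγ : PowerSeries ℝ) :
    Finset (Fin m) :=
  Finset.univ.filter fun i =>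
    ∀ n < e, PowerSeries.coeff (R := ℂ) n (φ i) = PowerSeries.coeff (R := ℂ) n (cxify φγ)

/-- For `i ∈ A`, the coefficient `cᵢ` of `t^e` in `φᵢ − φγ`. -/
noncomputable def cCoeff (e : ℕ) {m : ℕ} (φ : Fin m → PowerSeries ℂ) (φγ : PowerSeries ℝ)
    (i : Fin m) : ℂ :=
  PowerSeries.coeff (R := ℂ) e (φ i) - PowerSeries.coeff (R := ℂ) e (cxify φγ)

/-- For `i ∉ A`, the order `ord (φᵢ − φγ)`. -/
noncomputable def dOrd {m : ℕ} (φ : Fin m → PowerSeries ℂ) (φγ : PowerSeries ℝ)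
    (i : Fin m) : ℕ :=
  sInf {n : ℕ | PowerSeries.coeff (R := ℂ) n (φ i) ≠ PowerSeries.coeff (R := ℂ) n (cxify φγ)}

/-- For `i ∉ A`, the leading coefficient `bᵢ` of `φγ − φᵢ`. -/
noncomputable def bCoeff {m : ℕ} (φ : Fin m → PowerSeries ℂ) (φγ : PowerSeries ℝ)
    (i : Fin m) : ℂ :=
  PowerSeries.coeff (R := ℂ) (dOrd φ φγ i) (cxify φγ) - PowerSeries.coeff (R := ℂ) (dOrd φ φγ i) (φ i)

/-- `N = min{k : F_k ≠ 0}`. -/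
noncomputable def Nord (m : ℕ) (U : ℕ → PowerSeries ℂ) (φ : Fin m → PowerSeries ℂ)
    (φγ : PowerSeries ℝ) (e : ℕ) : ℕ :=
  sInf {k : ℕ | PowerSeries.coeff (R := Polynomial ℂ) k (Gser m U φ φγ e) ≠ 0}

/-- `P_{f,γ,ξ} = F_N`. -/
noncomputable def Ppoly (m : ℕ) (U : ℕ → PowerSeries ℂ) (φ : Fin m → PowerSeries ℂ)
    (φγ : PowerSeries ℝ) (e : ℕ) : Polynomial ℂ :=
  PowerSeries.coeff (R := Polynomial ℂ) (Nord m U φ φγ e) (Gser m U φ φγ e)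

section Aux

open Polynomial

/-- `f` has order `a` with leading coefficient `c`. -/
def HasLead (f : PowerSeries (Polynomial ℂ)) (a : ℕ) (c : Polynomial ℂ) : Prop :=
  (∀ n < a, PowerSeries.coeff (R := Polynomial ℂ) n f = 0) ∧
    PowerSeries.coeff (R := Polynomial ℂ) a f = c ∧ c ≠ 0

lemma HasLead.mul {f g : PowerSeries (Polynomial ℂ)} {a b : ℕ} {c d : Polynomial ℂ}
    (hf : HasLead f a c) (hg : HasLead g b d) : HasLead (f * g) (a + b) (c * d) := by
  obtain ⟨hf0, hfa, hfc⟩ := hf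
  obtain ⟨hg0, hgb, hgd⟩ := hg
  refine ⟨?_, ?_, mul_ne_zero hfc hgd⟩
  · intro n hn
    rw [PowerSeries.coeff_mul]
    refine Finset.sum_eq_zero fun p hp => ?_
    rw [Finset.HasAntidiagonal.mem_antidiagonal] at hp
    by_cases h1 : p.1 < a
    · rw [hf0 _ h1, zero_mul]
    · have : p.2 < b := by omega
      rw [hg0 _ this, mul_zero]
  · rw [PowerSeries.coeff_mul]
    rw [Finset.sum_eq_single (a, b)]
    · rw [hfa, hgb]
    · intro p hp hne
      rw [Finset.HasAntidiagonal.mem_antidiagonal] at hp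
      by_cases h1 : p.1 < a
      · rw [hf0 _ h1, zero_mul]
      · have : p.2 < b := by
          rcases lt_or_eq_of_le (not_lt.mp h1) with h | h
          · omega
          · exfalso; apply hne; ext <;> omega
        rw [hg0 _ this, mul_zero]
    · intro h
      exact absurd (show (a, b) ∈ Finset.HasAntidiagonal.antidiagonal (a + b) from
        Finset.HasAntidiagonal.mem_antidiagonal.mpr rfl) h

lemma HasLead.one : HasLead 1 0 1 := by
  refine ⟨fun n hn => absurd hn (Nat.not_lt_zero n), ?_, one_ne_zero⟩
  simp

lemma HasLead.prod {ι : Type*} (s : Finset ι) (f : ι → PowerSeries (Polynomial ℂ))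
    (a : ι → ℕ) (c : ι → Polynomial ℂ) (h : ∀ i ∈ s, HasLead (f i) (a i) (c i)) :
    HasLead (∏ i ∈ s, f i) (∑ i ∈ s, a i) (∏ i ∈ s, c i) := by
  classical
  induction s using Finset.cons_induction with
  | empty => simpa using HasLead.one
  | cons i s hi ih =>
    rw [Finset.prod_cons, Finset.sum_cons, Finset.prod_cons]
    exact (h i (Finset.mem_cons_self i s)).mul
      (ih fun j hj => h j (Finset.mem_cons_of_mem hj))

lemma coeff_xsub (φγ : PowerSeries ℝ) (e n : ℕ) :
    PowerSeries.coeff (R := Polynomial ℂ) n (xsub φγ e) =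
      Polynomial.C (PowerSeries.coeff (R := ℂ) n (cxify φγ)) + if n = e then Polynomial.X else 0 := by
  simp [xsub, PowerSeries.coeff_monomial]

lemma coeff_factor (φγ : PowerSeries ℝ) (e n : ℕ) {m : ℕ} (φ : Fin m → PowerSeries ℂ)
    (i : Fin m) :
    PowerSeries.coeff (R := Polynomial ℂ) n
        (xsub φγ e - PowerSeries.map (Polynomial.C : ℂ →+* Polynomial ℂ) (φ i)) =
      Polynomial.C (PowerSeries.coeff (R := ℂ) n (cxify φγ) - PowerSeries.coeff (R := ℂ) n (φ i)) +
        if n = e then Polynomial.X else 0 := by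
  simp [coeff_xsub, map_sub, sub_add_eq_add_sub, map_sub]

end Aux

/-- **The computation in the proof of Proposition 7.1.**  With
`A = {i : ord(φᵢ − φγ) ≥ Mξ}`, `cᵢ = coeff_{Mξ}(φᵢ − φγ)` for `i ∈ A`, and `bᵢ` the leading
coefficient of `φγ − φᵢ` for `i ∉ A`, one has `N = |A|·Mξ + Σ_{i∉A} ord(φᵢ − φγ)` and
`P_{f,γ,ξ}(z) = c·∏_{i∈A}(z − cᵢ)` with `c = U(0,0)·∏_{i∉A} bᵢ ≠ 0`.  In particular
`deg P_{f,γ,ξ} = |A|` and the complex roots of `P_{f,γ,ξ}` are exactly the `cᵢ`, `i ∈ A`. -/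
theorem prop71_computation
    (m M e : ℕ) (hm : 0 < m) (hM : 0 < M) (he : M < e)
    (U : ℕ → PowerSeries ℂ) (hU : PowerSeries.constantCoeff (R := ℂ) (U 0) ≠ 0)
    (φ : Fin m → PowerSeries ℂ) (hφ0 : ∀ i, PowerSeries.constantCoeff (R := ℂ) (φ i) = 0)
    (φγ : PowerSeries ℝ) (hφγ0 : PowerSeries.constantCoeff (R := ℝ) φγ = 0) :
    Nord m U φ φγ e = (Aset m e φ φγ).card * e + ∑ i ∈ (Aset m e φ φγ)ᶜ, dOrd φ φγ i ∧
    PowerSeries.constantCoeff (R := ℂ) (U 0) * ∏ i ∈ (Aset m e φ φγ)ᶜ, bCoeff φ φγ i ≠ 0 ∧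
    Ppoly m U φ φγ e =
      Polynomial.C (PowerSeries.constantCoeff (R := ℂ) (U 0) * ∏ i ∈ (Aset m e φ φγ)ᶜ, bCoeff φ φγ i) *
        ∏ i ∈ Aset m e φ φγ, (Polynomial.X - Polynomial.C (cCoeff e φ φγ i)) ∧
    (Ppoly m U φ φγ e).natDegree = (Aset m e φ φγ).card ∧
    ∀ z : ℂ, (Ppoly m U φ φγ e).IsRoot z ↔ ∃ i ∈ Aset m e φ φγ, cCoeff e φ φγ i = z := by
  classical
  set A := Aset m e φ φγ with hA
  set u0 := PowerSeries.constantCoeff (R := ℂ) (U 0) with hu0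
  have hAmem : ∀ i : Fin m, i ∈ A ↔
      ∀ n < e, PowerSeries.coeff (R := ℂ) n (φ i) = PowerSeries.coeff (R := ℂ) n (cxify φγ) := by
    intro i; simp [hA, Aset]
  -- properties of dOrd for i ∉ A
  have hd : ∀ i ∉ A, dOrd φ φγ i < e ∧
      (∀ n < dOrd φ φγ i, PowerSeries.coeff (R := ℂ) n (φ i) = PowerSeries.coeff (R := ℂ) n (cxify φγ)) ∧
      PowerSeries.coeff (R := ℂ) (dOrd φ φγ i) (φ i) ≠
        PowerSeries.coeff (R := ℂ) (dOrd φ φγ i) (cxify φγ) := by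
    intro i hi
    rw [hAmem] at hi; push_neg at hi
    obtain ⟨n, hn, hne⟩ := hi
    have hnmem : n ∈ {k : ℕ | PowerSeries.coeff (R := ℂ) k (φ i) ≠ PowerSeries.coeff (R := ℂ) k (cxify φγ)} :=
      hne
    have hS : {k : ℕ | PowerSeries.coeff (R := ℂ) k (φ i) ≠
        PowerSeries.coeff (R := ℂ) k (cxify φγ)}.Nonempty := ⟨n, hnmem⟩
    refine ⟨lt_of_le_of_lt (Nat.sInf_le hnmem) hn, ?_, Nat.sInf_mem hS⟩
    intro k hk
    by_contra hk'
    exact absurd (Nat.sInf_le hk') (not_le.mpr hk)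
  -- leading data for the factors
  set a : Fin m → ℕ := fun i => if i ∈ A then e else dOrd φ φγ i with ha
  set c : Fin m → Polynomial ℂ := fun i =>
    if i ∈ A then Polynomial.X - Polynomial.C (cCoeff e φ φγ i)
    else Polynomial.C (bCoeff φ φγ i) with hcdef
  have hfac : ∀ i : Fin m,
      HasLead (xsub φγ e - PowerSeries.map (Polynomial.C : ℂ →+* Polynomial ℂ) (φ i))
        (a i) (c i) := by
    intro i
    by_cases hi : i ∈ A
    · simp only [ha, hcdef, hi, if_true]
      refine ⟨?_, ?_, Polynomial.X_sub_C_ne_zero _⟩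
      · intro n hn
        rw [coeff_factor, (hAmem i).mp hi n hn, if_neg (by omega), sub_self, map_zero, add_zero]
      · rw [coeff_factor, if_pos rfl, cCoeff]
        simp only [map_sub]
        ring
    · obtain ⟨hde, hlow, hne⟩ := hd i hi
      simp only [ha, hcdef, hi, if_false]
      refine ⟨?_, ?_, ?_⟩
      · intro n hn
        rw [coeff_factor, hlow n hn, if_neg (by omega), sub_self, map_zero, add_zero]
      · rw [coeff_factor, if_neg (by omega), add_zero, bCoeff]
      · exact Polynomial.C_ne_zero.mpr (sub_ne_zero.mpr (Ne.symm hne))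
  -- leading data for the substituted unit
  have hsub : HasLead (substX U (xsub φγ e)) 0 (Polynomial.C u0) := by
    refine ⟨fun n hn => absurd hn (Nat.not_lt_zero n), ?_, Polynomial.C_ne_zero.mpr hU⟩
    rw [substX, PowerSeries.coeff_mk, Finset.sum_range_one, pow_zero, mul_one,
      PowerSeries.coeff_map]
    simp [hu0]
  have hprod := HasLead.prod Finset.univ _ a c (fun i _ => hfac i)
  have hG : HasLead (Gser m U φ φγ e) ((0 : ℕ) + ∑ i, a i)
      (Polynomial.C u0 * ∏ i, c i) := hsub.mul hprod
  -- simplify order and leading coefficient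
  have hNval : (0 : ℕ) + ∑ i, a i = A.card * e + ∑ i ∈ Aᶜ, dOrd φ φγ i := by
    rw [zero_add, ← Finset.sum_add_sum_compl A a]
    congr 1
    · have hsA : ∑ i ∈ A, a i = ∑ _i ∈ A, e :=
        Finset.sum_congr rfl fun i hi => by simp [ha, hi]
      rw [hsA, Finset.sum_const, smul_eq_mul]
    · exact Finset.sum_congr rfl fun i hi => by simp [ha, Finset.mem_compl.mp hi]
  have hCval : Polynomial.C u0 * ∏ i, c i =
      Polynomial.C (u0 * ∏ i ∈ Aᶜ, bCoeff φ φγ i) *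
        ∏ i ∈ A, (Polynomial.X - Polynomial.C (cCoeff e φ φγ i)) := by
    rw [← Finset.prod_mul_prod_compl A c]
    have h1 : ∏ i ∈ A, c i = ∏ i ∈ A, (Polynomial.X - Polynomial.C (cCoeff e φ φγ i)) :=
      Finset.prod_congr rfl fun i hi => by simp [hcdef, hi]
    have h2 : ∏ i ∈ Aᶜ, c i = Polynomial.C (∏ i ∈ Aᶜ, bCoeff φ φγ i) := by
      rw [map_prod]
      exact Finset.prod_congr rfl fun i hi => by simp [hcdef, Finset.mem_compl.mp hi]
    rw [h1, h2, map_mul]; ring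
  have hc : u0 * ∏ i ∈ Aᶜ, bCoeff φ φγ i ≠ 0 := by
    apply mul_ne_zero hU
    rw [Finset.prod_ne_zero_iff]
    intro i hi
    exact sub_ne_zero.mpr (Ne.symm (hd i (Finset.mem_compl.mp hi)).2.2)
  have hG' : HasLead (Gser m U φ φγ e) (A.card * e + ∑ i ∈ Aᶜ, dOrd φ φγ i)
      (Polynomial.C (u0 * ∏ i ∈ Aᶜ, bCoeff φ φγ i) *
        ∏ i ∈ A, (Polynomial.X - Polynomial.C (cCoeff e φ φγ i))) := by
    rw [← hNval, ← hCval]; exact hG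
  have hmem : PowerSeries.coeff (R := Polynomial ℂ) (A.card * e + ∑ i ∈ Aᶜ, dOrd φ φγ i)
      (Gser m U φ φγ e) ≠ 0 := by
    rw [hG'.2.1]; exact hG'.2.2
  have hNord : Nord m U φ φγ e = A.card * e + ∑ i ∈ Aᶜ, dOrd φ φγ i := by
    apply le_antisymm
    · exact Nat.sInf_le hmem
    · by_contra h
      push_neg at h
      have hne : PowerSeries.coeff (R := Polynomial ℂ) (Nord m U φ φγ e) (Gser m U φ φγ e) ≠ 0 :=
        Nat.sInf_mem (⟨_, hmem⟩ :
          {k : ℕ | PowerSeries.coeff (R := Polynomial ℂ) k (Gser m U φ φγ e) ≠ 0}.Nonempty)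
      exact hne (hG'.1 _ h)
  have hP : Ppoly m U φ φγ e = Polynomial.C (u0 * ∏ i ∈ Aᶜ, bCoeff φ φγ i) *
      ∏ i ∈ A, (Polynomial.X - Polynomial.C (cCoeff e φ φγ i)) := by
    show PowerSeries.coeff (R := Polynomial ℂ) (Nord m U φ φγ e) (Gser m U φ φγ e) = _
    rw [hNord]; exact hG'.2.1
  have hdeg : (Ppoly m U φ φγ e).natDegree = A.card := by
    rw [hP, Polynomial.natDegree_C_mul hc,
      Polynomial.natDegree_prod _ _ fun i _ => Polynomial.X_sub_C_ne_zero _]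
    simp [Polynomial.natDegree_X_sub_C]
  refine ⟨hNord, hc, hP, hdeg, ?_⟩
  intro z
  rw [hP]
  simp only [Polynomial.IsRoot, Polynomial.eval_mul, Polynomial.eval_C, Polynomial.eval_prod,
    Polynomial.eval_sub, Polynomial.eval_X]
  constructor
  · intro h
    rcases mul_eq_zero.mp h with h | h
    · exact absurd h hc
    · obtain ⟨i, hi, h⟩ := Finset.prod_eq_zero_iff.mp h
      exact ⟨i, hi, (sub_eq_zero.mp h).symm⟩
  · rintro ⟨i, hi, h⟩
    exact mul_eq_zero.mpr (Or.inr (Finset.prod_eq_zero hi (by rw [h, sub_self])))
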